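/- Let m ≥ 2 and let τ ∈ S_m be a permutation that does not contain tightly at least one of the patterns 12 and 21. Then for all n ≥ 3, all l with 2 ≤ l ≤ n-1, and all k with 1 ≤ k ≤ n-l+1, one has |A^{(n)}_{l;k} ∩ S_n(τ)| ≥ |S_{n-l+1}(τ)|; equivalently, P_n^{av(τ)}(A^{(n)}_{l;k}) ≥ |S_{n-l+1}(τ)| / |S_n(τ)|. -/
import Mathlib

open Filter

def Contains {n m : ℕ} (σ : Fin n → Fin n) (τ : Fin m → Fin m) : Prop :=
  ∃ f : Fin m → Fin n, StrictMono f ∧ ∀ j k : Fin m, σ (f j) < σ (f k) ↔ τ j < τ k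

def Avoids {n m : ℕ} (σ : Fin n → Fin n) (τ : Fin m → Fin m) : Prop :=
  ¬ Contains σ τ

def AvoidSet (n : ℕ) {m : ℕ} (τ : Equiv.Perm (Fin m)) : Set (Equiv.Perm (Fin n)) :=
  {σ : Equiv.Perm (Fin n) | Avoids ⇑σ ⇑τ}

def ClusterAt {n : ℕ} (l k a : ℕ) (σ : Equiv.Perm (Fin n)) : Prop :=
  (Finset.univ.filter fun i : Fin n => a ≤ (i : ℕ) + 1 ∧ (i : ℕ) + 1 < a + l).image
      (fun i => (σ i : ℕ) + 1) = Finset.Ico k (k + l)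

def ClusterEvent (n l k : ℕ) : Set (Equiv.Perm (Fin n)) :=
  {σ : Equiv.Perm (Fin n) | ∃ a : ℕ, 1 ≤ a ∧ a ≤ n - l + 1 ∧ ClusterAt l k a σ}

def ClusterFree {m : ℕ} (τ : Equiv.Perm (Fin m)) : Prop :=
  ∀ l a k : ℕ, 2 ≤ l → l ≤ m - 1 → 1 ≤ a → a + l ≤ m + 1 → ¬ ClusterAt l k a τ

def ContainsTightly12 {m : ℕ} (τ : Equiv.Perm (Fin m)) : Prop :=
  ∃ i j : Fin m, (j : ℕ) = (i : ℕ) + 1 ∧ (τ j : ℕ) = (τ i : ℕ) + 1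

def ContainsTightly21 {m : ℕ} (τ : Equiv.Perm (Fin m)) : Prop :=
  ∃ i j : Fin m, (j : ℕ) = (i : ℕ) + 1 ∧ (τ i : ℕ) = (τ j : ℕ) + 1

def perm123 : Equiv.Perm (Fin 3) := Equiv.refl (Fin 3)

def perm321 : Equiv.Perm (Fin 3) :=
  ⟨![2, 1, 0], ![2, 1, 0], by intro x; fin_cases x <;> rfl, by intro x; fin_cases x <;> rfl⟩

def p2413 : Equiv.Perm (Fin 4) :=
  ⟨![1, 3, 0, 2], ![2, 0, 3, 1], by intro x; fin_cases x <;> rfl, by intro x; fin_cases x <;> rfl⟩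

def p3142 : Equiv.Perm (Fin 4) :=
  ⟨![2, 0, 3, 1], ![1, 3, 0, 2], by intro x; fin_cases x <;> rfl, by intro x; fin_cases x <;> rfl⟩

def SepSet (n : ℕ) : Set (Equiv.Perm (Fin n)) :=
  {σ : Equiv.Perm (Fin n) | Avoids ⇑σ ⇑p2413 ∧ Avoids ⇑σ ⇑p3142}



def liftv (K d v : ℕ) : ℕ := if v ≤ K then v else v + d

lemma liftv_strictMono (K d : ℕ) : StrictMono (liftv K d) := by
  intro a b hab
  unfold liftv
  split <;> split <;> omega

def infN (d K p : ℕ) (ε : Bool) (sf : ℕ → ℕ) (i : ℕ) : ℕ :=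
  if i < p then liftv K d (sf i)
  else if i ≤ p + d then (if ε then K + (i - p) else K + (p + d - i))
  else liftv K d (sf (i - d))

def delpos (d p i : ℕ) : ℕ := if i < p then i else if i ≤ p + d then p else i - d

def sfun (s : ℕ) (σ : Equiv.Perm (Fin s)) : ℕ → ℕ :=
  fun i => if h : i < s then (σ ⟨i, h⟩ : ℕ) else 0

lemma sfun_eq (s : ℕ) (σ : Equiv.Perm (Fin s)) (i : ℕ) (h : i < s) :
    sfun s σ i = (σ ⟨i, h⟩ : ℕ) := dif_pos h

lemma sfun_lt (s : ℕ) (σ : Equiv.Perm (Fin s)) (i : ℕ) (h : i < s) :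
    sfun s σ i < s := by rw [sfun_eq s σ i h]; exact (σ ⟨i, h⟩).isLt

lemma sfun_inj (s : ℕ) (σ : Equiv.Perm (Fin s)) (i j : ℕ) (hi : i < s) (hj : j < s)
    (h : sfun s σ i = sfun s σ j) : i = j := by
  rw [sfun_eq s σ i hi, sfun_eq s σ j hj] at h
  have := σ.injective (Fin.ext h)
  exact congrArg Fin.val this

lemma sfun_eqK (s : ℕ) (σ : Equiv.Perm (Fin s)) (K : ℕ) (hK : K < s) (i : ℕ) (hi : i < s) :
    sfun s σ i = K ↔ i = ((σ.symm ⟨K, hK⟩ : Fin s) : ℕ) := by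
  rw [sfun_eq s σ i hi]
  constructor
  · intro h
    have : σ ⟨i, hi⟩ = ⟨K, hK⟩ := Fin.ext h
    have := congrArg σ.symm this
    rw [Equiv.symm_apply_apply] at this
    exact congrArg Fin.val this
  · intro h
    have : (⟨i, hi⟩ : Fin s) = σ.symm ⟨K, hK⟩ := Fin.ext h
    rw [this, Equiv.apply_symm_apply]

section Core
variable (s d K p : ℕ) (ε : Bool) (sf : ℕ → ℕ)

lemma infN_block_mem {i : ℕ} (h1 : p ≤ i) (h2 : i ≤ p + d) :
    K ≤ infN d K p ε sf i ∧ infN d K p ε sf i ≤ K + d := by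
  have h3 : ¬ i < p := by omega
  simp only [infN, if_neg h3, if_pos h2]
  split <;> omega

lemma infN_block_formula {i : ℕ} (h1 : p ≤ i) (h2 : i ≤ p + d) :
    infN d K p ε sf i = if ε then K + (i - p) else K + (p + d - i) := by
  have h3 : ¬ i < p := by omega
  simp only [infN, if_neg h3, if_pos h2]

lemma delpos_block {i : ℕ} (h1 : p ≤ i) (h2 : i ≤ p + d) : delpos d p i = p := by
  have h3 : ¬ i < p := by omega
  simp only [delpos, if_neg h3, if_pos h2]

lemma infN_out {i : ℕ} (h2 : i < p ∨ p + d < i) :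
    infN d K p ε sf i = liftv K d (sf (delpos d p i)) := by
  rcases h2 with h | h
  · simp only [infN, delpos, if_pos h]
  · have h3 : ¬ i < p := by omega
    have h4 : ¬ i ≤ p + d := by omega
    simp only [infN, delpos, if_neg h3, if_neg h4]

lemma delpos_out_lt (hp : p < s) {i : ℕ} (hi : i < s + d) (h2 : i < p ∨ p + d < i) :
    delpos d p i < s ∧ delpos d p i ≠ p := by
  unfold delpos; split_ifs <;> omega

lemma delpos_lt (hp : p < s) {i : ℕ} (hi : i < s + d) : delpos d p i < s := by
  unfold delpos; split_ifs <;> omega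

lemma delpos_strict {i j : ℕ} (hij : i < j)
    (h : ¬ ((p ≤ i ∧ i ≤ p + d) ∧ (p ≤ j ∧ j ≤ p + d))) :
    delpos d p i < delpos d p j := by
  unfold delpos; split_ifs <;> omega

lemma infN_lt (hK : K < s) (hp : p < s) (hsf : ∀ i < s, sf i < s) {i : ℕ} (hi : i < s + d) :
    infN d K p ε sf i < s + d := by
  by_cases hb : p ≤ i ∧ i ≤ p + d
  · have h2 := infN_block_mem d K p ε sf hb.1 hb.2
    omega
  · have h2 : i < p ∨ p + d < i := by omega
    rw [infN_out d K p ε sf h2]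
    have h3 := delpos_lt s d p hp hi
    have h4 := hsf _ h3
    unfold liftv; split <;> omega

lemma infN_nonblock (hp : p < s) (hpK : ∀ i < s, (sf i = K ↔ i = p))
    {i : ℕ} (hi : i < s + d) (h2 : i < p ∨ p + d < i) :
    infN d K p ε sf i < K ∨ K + d < infN d K p ε sf i := by
  rw [infN_out d K p ε sf h2]
  obtain ⟨hlt, hne⟩ := delpos_out_lt s d p hp hi h2
  have h5 : sf (delpos d p i) ≠ K := fun hc => hne ((hpK _ hlt).mp hc)
  unfold liftv; split <;> omega

lemma infN_inj (hp : p < s) (hsf : ∀ i < s, sf i < s)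
    (hinj : ∀ i < s, ∀ j < s, sf i = sf j → i = j)
    (hpK : ∀ i < s, (sf i = K ↔ i = p))
    {i j : ℕ} (hi : i < s + d) (hj : j < s + d)
    (h : infN d K p ε sf i = infN d K p ε sf j) : i = j := by
  by_cases hbi : p ≤ i ∧ i ≤ p + d <;> by_cases hbj : p ≤ j ∧ j ≤ p + d
  · rw [infN_block_formula d K p ε sf hbi.1 hbi.2,
      infN_block_formula d K p ε sf hbj.1 hbj.2] at h
    rcases ε with _ | _ <;> simp at h <;> omega
  · have h1 := infN_block_mem d K p ε sf hbi.1 hbi.2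
    have h2 := infN_nonblock s d K p ε sf hp hpK hj (by omega)
    omega
  · have h1 := infN_block_mem d K p ε sf hbj.1 hbj.2
    have h2 := infN_nonblock s d K p ε sf hp hpK hi (by omega)
    omega
  · have h2i : i < p ∨ p + d < i := by omega
    have h2j : j < p ∨ p + d < j := by omega
    rw [infN_out d K p ε sf h2i, infN_out d K p ε sf h2j] at h
    have := (liftv_strictMono K d).injective h
    have := hinj _ (delpos_lt s d p hp hi) _ (delpos_lt s d p hp hj) this
    unfold delpos at this; split_ifs at this <;> omega

lemma infN_compat (hp : p < s) (hsfp : sf p = K)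
    (hpK : ∀ i < s, (sf i = K ↔ i = p))
    {i j : ℕ} (hi : i < s + d) (hj : j < s + d)
    (hnb : ¬ ((p ≤ i ∧ i ≤ p + d) ∧ (p ≤ j ∧ j ≤ p + d))) :
    (infN d K p ε sf i < infN d K p ε sf j ↔ sf (delpos d p i) < sf (delpos d p j)) := by
  by_cases hbi : p ≤ i ∧ i ≤ p + d <;> by_cases hbj : p ≤ j ∧ j ≤ p + d
  · exact absurd ⟨hbi, hbj⟩ hnb
  · have h1 := infN_block_mem d K p ε sf hbi.1 hbi.2
    have h2j : j < p ∨ p + d < j := by omega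
    rw [delpos_block d p hbi.1 hbi.2, hsfp, infN_out d K p ε sf h2j]
    obtain ⟨hlt, hne⟩ := delpos_out_lt s d p hp hj h2j
    have h5 : sf (delpos d p j) ≠ K := fun hc => hne ((hpK _ hlt).mp hc)
    unfold liftv; split <;> omega
  · have h1 := infN_block_mem d K p ε sf hbj.1 hbj.2
    have h2i : i < p ∨ p + d < i := by omega
    rw [delpos_block d p hbj.1 hbj.2, hsfp, infN_out d K p ε sf h2i]
    obtain ⟨hlt, hne⟩ := delpos_out_lt s d p hp hi h2i
    have h5 : sf (delpos d p i) ≠ K := fun hc => hne ((hpK _ hlt).mp hc)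
    unfold liftv; split <;> omega
  · rw [infN_out d K p ε sf (by omega), infN_out d K p ε sf (by omega)]
    exact (liftv_strictMono K d).lt_iff_lt

lemma infN_eqK (hp : p < s) (hpK : ∀ i < s, (sf i = K ↔ i = p))
    {i : ℕ} (hi : i < s + d) :
    infN d K p ε sf i = K ↔ i = (if ε then p else p + d) := by
  by_cases hbi : p ≤ i ∧ i ≤ p + d
  · rw [infN_block_formula d K p ε sf hbi.1 hbi.2]
    rcases ε with _ | _ <;> simp <;> omega
  · have h2 := infN_nonblock s d K p ε sf hp hpK hi (by omega)
    constructor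
    · intro h; omega
    · intro h; rcases ε with _ | _ <;> simp at h <;> omega

end Core

lemma infN_block_true (s' d K p : ℕ) (sf : ℕ → ℕ) {i : ℕ} (h1 : p ≤ i) (h2 : i ≤ p + d) :
    infN d K p true sf i = K + (i - p) := by
  rw [infN_block_formula d K p true sf h1 h2]; simp

lemma infN_block_false (s' d K p : ℕ) (sf : ℕ → ℕ) {i : ℕ} (h1 : p ≤ i) (h2 : i ≤ p + d) :
    infN d K p false sf i = K + (p + d - i) := by
  rw [infN_block_formula d K p false sf h1 h2]; simp

lemma sfun_coe {s : ℕ} (σ : Equiv.Perm (Fin s)) (x : Fin s) :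
    sfun s σ (x : ℕ) = (σ x : ℕ) := by
  rw [sfun_eq s σ _ x.isLt, Fin.eta]

noncomputable def infPerm (s d K : ℕ) (hK : K < s) (ε : Bool) (σ : Equiv.Perm (Fin s)) :
    Equiv.Perm (Fin (s + d)) :=
  Equiv.ofBijective
    (fun i => ⟨infN d K ((σ.symm ⟨K, hK⟩ : Fin s) : ℕ) ε (sfun s σ) i,
      infN_lt s d K _ ε _ hK (σ.symm ⟨K, hK⟩).isLt (fun j hj => sfun_lt s σ j hj) i.isLt⟩)
    (Finite.injective_iff_bijective.mp fun i j hij => Fin.ext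
      (infN_inj s d K _ ε _ (σ.symm ⟨K, hK⟩).isLt (fun j hj => sfun_lt s σ j hj)
        (fun a ha b hb hab => sfun_inj s σ a b ha hb hab) (fun a ha => sfun_eqK s σ K hK a ha)
        i.isLt j.isLt (congrArg Fin.val hij)))

lemma infPerm_val {s : ℕ} (d K : ℕ) (hK : K < s) (ε : Bool) (σ : Equiv.Perm (Fin s))
    (x : Fin (s + d)) :
    ((infPerm s d K hK ε σ) x : ℕ)
      = infN d K ((σ.symm ⟨K, hK⟩ : Fin s) : ℕ) ε (sfun s σ) (x : ℕ) := rfl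

lemma infPerm_injective (s d K : ℕ) (hK : K < s) (ε : Bool) :
    Function.Injective (fun σ : Equiv.Perm (Fin s) => infPerm s d K hK ε σ) := by
  intro σ₁ σ₂ h
  simp only at h
  set p₁ : ℕ := ((σ₁.symm ⟨K, hK⟩ : Fin s) : ℕ) with hp₁def
  set p₂ : ℕ := ((σ₂.symm ⟨K, hK⟩ : Fin s) : ℕ) with hp₂def
  have hp₁ : p₁ < s := (σ₁.symm ⟨K, hK⟩).isLt
  have hp₂ : p₂ < s := (σ₂.symm ⟨K, hK⟩).isLt
  have hpK₁ : ∀ a < s, (sfun s σ₁ a = K ↔ a = p₁) := fun a ha => sfun_eqK s σ₁ K hK a ha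
  have hpK₂ : ∀ a < s, (sfun s σ₂ a = K ↔ a = p₂) := fun a ha => sfun_eqK s σ₂ K hK a ha
  have hvals : ∀ i : ℕ, ∀ hi : i < s + d,
      infN d K p₁ ε (sfun s σ₁) i = infN d K p₂ ε (sfun s σ₂) i := by
    intro i hi
    exact congrArg Fin.val (Equiv.ext_iff.mp h ⟨i, hi⟩)
  -- recover p
  have hq : (if ε then p₁ else p₁ + d) < s + d := by
    rcases ε with _ | _ <;> simp <;> omega
  have hpe : p₁ = p₂ := by
    have h1 : infN d K p₁ ε (sfun s σ₁) (if ε then p₁ else p₁ + d) = K :=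
      (infN_eqK s d K p₁ ε (sfun s σ₁) hp₁ hpK₁ hq).mpr rfl
    have h2 : infN d K p₂ ε (sfun s σ₂) (if ε then p₁ else p₁ + d) = K := by
      rw [← hvals _ hq]; exact h1
    have h3 := (infN_eqK s d K p₂ ε (sfun s σ₂) hp₂ hpK₂ hq).mp h2
    rcases ε with _ | _ <;> simp at h3 <;> omega
  rw [← hpe] at hvals
  apply Equiv.ext
  intro x
  rcases lt_trichotomy ((x : Fin s) : ℕ) p₁ with hx | hx | hx
  · have e := hvals (x : ℕ) (by have := x.isLt; omega)
    rw [infN_out d K p₁ ε _ (Or.inl hx), infN_out d K p₁ ε _ (Or.inl hx)] at e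
    have hdx : delpos d p₁ (x : ℕ) = (x : ℕ) := by unfold delpos; rw [if_pos hx]
    rw [hdx, sfun_coe, sfun_coe] at e
    exact Fin.ext ((liftv_strictMono K d).injective e)
  · have hx1 : x = σ₁.symm ⟨K, hK⟩ := Fin.ext hx
    have hx2 : x = σ₂.symm ⟨K, hK⟩ := Fin.ext (by rw [hx, hpe])
    have e1 : σ₁ x = ⟨K, hK⟩ := by rw [hx1]; exact σ₁.apply_symm_apply _
    have e2 : σ₂ x = ⟨K, hK⟩ := by rw [hx2]; exact σ₂.apply_symm_apply _
    rw [e1, e2]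
  · have e := hvals ((x : ℕ) + d) (by have := x.isLt; omega)
    have hout : (x : ℕ) + d < p₁ ∨ p₁ + d < (x : ℕ) + d := Or.inr (by omega)
    rw [infN_out d K p₁ ε _ hout, infN_out d K p₁ ε _ hout] at e
    have hdx : delpos d p₁ ((x : ℕ) + d) = (x : ℕ) := by
      unfold delpos; split_ifs <;> omega
    rw [hdx, sfun_coe, sfun_coe] at e
    exact Fin.ext ((liftv_strictMono K d).injective e)

lemma infPerm_cluster (s d K : ℕ) (hK : K < s) (ε : Bool) (σ : Equiv.Perm (Fin s)) :
    infPerm s d K hK ε σ ∈ ClusterEvent (s + d) (d + 1) (K + 1) := by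
  set p : ℕ := ((σ.symm ⟨K, hK⟩ : Fin s) : ℕ) with hpdef
  have hp : p < s := (σ.symm ⟨K, hK⟩).isLt
  refine ⟨p + 1, by omega, by omega, ?_⟩
  unfold ClusterAt
  ext v
  simp only [Finset.mem_image, Finset.mem_filter, Finset.mem_univ, true_and, Finset.mem_Ico]
  constructor
  · rintro ⟨i, ⟨hi1, hi2⟩, rfl⟩
    have hb1 : p ≤ (i : ℕ) := by omega
    have hb2 : (i : ℕ) ≤ p + d := by omega
    have := infN_block_mem d K p ε (sfun s σ) hb1 hb2
    rw [infPerm_val, ← hpdef]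
    omega
  · rintro ⟨hv1, hv2⟩
    set t : ℕ := v - (K + 1) with htdef
    have ht : t ≤ d := by omega
    refine ⟨⟨if ε then p + t else p + d - t, by rcases ε with _ | _ <;> simp <;> omega⟩,
      ⟨by rcases ε with _ | _ <;> simp <;> omega, by rcases ε with _ | _ <;> simp <;> omega⟩, ?_⟩
    show infN d K p ε (sfun s σ) (if ε = true then p + t else p + d - t) + 1 = v
    have hb1 : p ≤ (if ε then p + t else p + d - t) := by
      rcases ε with _ | _ <;> simp <;> omega
    have hb2 : (if ε then p + t else p + d - t) ≤ p + d := by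
      rcases ε with _ | _ <;> simp <;> omega
    rw [infN_block_formula d K p ε (sfun s σ) hb1 hb2]
    rcases ε with _ | _ <;> simp <;> omega

lemma infPerm_avoids {m : ℕ} (s d K : ℕ) (hK : K < s) (ε : Bool) (σ : Equiv.Perm (Fin s))
    (τ : Equiv.Perm (Fin m))
    (hτ : if ε then ¬ ContainsTightly12 τ else ¬ ContainsTightly21 τ)
    (hσ : Avoids ⇑σ ⇑τ) : Avoids ⇑(infPerm s d K hK ε σ) ⇑τ := by
  rintro ⟨f, hfm, hfp⟩
  set p : ℕ := ((σ.symm ⟨K, hK⟩ : Fin s) : ℕ) with hpdef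
  have hp : p < s := (σ.symm ⟨K, hK⟩).isLt
  have hpK : ∀ a < s, (sfun s σ a = K ↔ a = p) := fun a ha => sfun_eqK s σ K hK a ha
  have hsfp : sfun s σ p = K := (hpK p hp).mpr rfl
  have hpat : ∀ j k : Fin m,
      infN d K p ε (sfun s σ) ((f j : ℕ)) < infN d K p ε (sfun s σ) ((f k : ℕ)) ↔ τ j < τ k :=
    fun j k => hfp j k
  by_cases hpair : ∃ (j : Fin m) (hj : (j : ℕ) + 1 < m),
      (p ≤ (f j : ℕ) ∧ (f j : ℕ) ≤ p + d) ∧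
      (p ≤ (f ⟨(j : ℕ) + 1, hj⟩ : ℕ) ∧ (f ⟨(j : ℕ) + 1, hj⟩ : ℕ) ≤ p + d)
  · obtain ⟨j, hj, hbj, hbj'⟩ := hpair
    set j' : Fin m := ⟨(j : ℕ) + 1, hj⟩ with hj'def
    have hj'val : (j' : ℕ) = (j : ℕ) + 1 := rfl
    have hjj' : j < j' := Fin.lt_def.mpr (by omega)
    have hff : (f j : ℕ) < (f j' : ℕ) := Fin.lt_def.mp (hfm hjj')
    have hmemj := infN_block_mem d K p ε (sfun s σ) hbj.1 hbj.2
    have hmemj' := infN_block_mem d K p ε (sfun s σ) hbj'.1 hbj'.2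
    rcases ε with _ | _
    · -- decreasing block, no tight 21
      simp only [Bool.false_eq_true, if_false] at hτ
      have hFj := infN_block_false s d K p (sfun s σ) hbj.1 hbj.2
      have hFj' := infN_block_false s d K p (sfun s σ) hbj'.1 hbj'.2
      have hτlt : τ j' < τ j := by
        refine (hpat j' j).mp ?_
        rw [hFj, hFj']
        omega
      have hne : (τ j : ℕ) ≠ (τ j' : ℕ) + 1 := fun hc => hτ ⟨j, j', rfl, hc⟩
      have h1m : (τ j' : ℕ) + 1 < m := by
        have := (τ j).isLt; have := Fin.lt_def.mp hτlt; omega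
      set hh : Fin m := τ.symm ⟨(τ j' : ℕ) + 1, h1m⟩ with hhdef
      have hτh : (τ hh : ℕ) = (τ j' : ℕ) + 1 := by
        rw [hhdef, Equiv.apply_symm_apply]
      have hA : infN d K p false (sfun s σ) ((f j' : ℕ)) < infN d K p false (sfun s σ) ((f hh : ℕ)) :=
        (hpat j' hh).mpr (Fin.lt_def.mpr (by omega))
      have hB : infN d K p false (sfun s σ) ((f hh : ℕ)) < infN d K p false (sfun s σ) ((f j : ℕ)) :=
        (hpat hh j).mpr (Fin.lt_def.mpr (by have := Fin.lt_def.mp hτlt; omega))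
      have hfh_in : p ≤ (f hh : ℕ) ∧ (f hh : ℕ) ≤ p + d := by
        by_contra hc
        have := infN_nonblock s d K p false (sfun s σ) hp hpK (f hh).isLt (by omega)
        omega
      have hform_h := infN_block_false s d K p (sfun s σ) hfh_in.1 hfh_in.2
      rw [hFj, hform_h] at hB
      rw [hFj', hform_h] at hA
      have hpos1 : (f j : ℕ) < (f hh : ℕ) := by omega
      have hpos2 : (f hh : ℕ) < (f j' : ℕ) := by omega
      have h1 : j < hh := hfm.lt_iff_lt.mp (Fin.lt_def.mpr hpos1)
      have h2 : hh < j' := hfm.lt_iff_lt.mp (Fin.lt_def.mpr hpos2)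
      have e1 := Fin.lt_def.mp h1
      have e2 := Fin.lt_def.mp h2
      omega
    · -- increasing block, no tight 12
      simp only [if_true] at hτ
      have hFj := infN_block_true s d K p (sfun s σ) hbj.1 hbj.2
      have hFj' := infN_block_true s d K p (sfun s σ) hbj'.1 hbj'.2
      have hτlt : τ j < τ j' := by
        refine (hpat j j').mp ?_
        rw [hFj, hFj']
        omega
      have hne : (τ j' : ℕ) ≠ (τ j : ℕ) + 1 := fun hc => hτ ⟨j, j', rfl, hc⟩
      have h1m : (τ j : ℕ) + 1 < m := by
        have := (τ j').isLt; have := Fin.lt_def.mp hτlt; omega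
      set hh : Fin m := τ.symm ⟨(τ j : ℕ) + 1, h1m⟩ with hhdef
      have hτh : (τ hh : ℕ) = (τ j : ℕ) + 1 := by
        rw [hhdef, Equiv.apply_symm_apply]
      have hA : infN d K p true (sfun s σ) ((f j : ℕ)) < infN d K p true (sfun s σ) ((f hh : ℕ)) :=
        (hpat j hh).mpr (Fin.lt_def.mpr (by omega))
      have hB : infN d K p true (sfun s σ) ((f hh : ℕ)) < infN d K p true (sfun s σ) ((f j' : ℕ)) :=
        (hpat hh j').mpr (Fin.lt_def.mpr (by have := Fin.lt_def.mp hτlt; omega))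
      have hfh_in : p ≤ (f hh : ℕ) ∧ (f hh : ℕ) ≤ p + d := by
        by_contra hc
        have := infN_nonblock s d K p true (sfun s σ) hp hpK (f hh).isLt (by omega)
        omega
      have hform_h := infN_block_true s d K p (sfun s σ) hfh_in.1 hfh_in.2
      rw [hFj, hform_h] at hA
      rw [hFj', hform_h] at hB
      have hpos1 : (f j : ℕ) < (f hh : ℕ) := by omega
      have hpos2 : (f hh : ℕ) < (f j' : ℕ) := by omega
      have h1 : j < hh := hfm.lt_iff_lt.mp (Fin.lt_def.mpr hpos1)
      have h2 : hh < j' := hfm.lt_iff_lt.mp (Fin.lt_def.mpr hpos2)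
      have e1 := Fin.lt_def.mp h1
      have e2 := Fin.lt_def.mp h2
      omega
  · -- no two pattern indices land in the block
    have hsep : ∀ j j' : Fin m, j < j' →
        ¬ ((p ≤ (f j : ℕ) ∧ (f j : ℕ) ≤ p + d) ∧ (p ≤ (f j' : ℕ) ∧ (f j' : ℕ) ≤ p + d)) := by
      rintro j j' hlt ⟨hb, hb'⟩
      have hj1 : (j : ℕ) + 1 < m := by
        have := j'.isLt; have := Fin.lt_def.mp hlt; omega
      refine hpair ⟨j, hj1, hb, ?_⟩
      have e1 : (f j : ℕ) < (f ⟨(j : ℕ) + 1, hj1⟩ : ℕ) :=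
        Fin.lt_def.mp (hfm (Fin.lt_def.mpr (Nat.lt_succ_self (j : ℕ))))
      have e2 : (f ⟨(j : ℕ) + 1, hj1⟩ : ℕ) ≤ (f j' : ℕ) := by
        have hle : (⟨(j : ℕ) + 1, hj1⟩ : Fin m) ≤ j' :=
          Fin.le_def.mpr (show (j : ℕ) + 1 ≤ (j' : ℕ) from Fin.lt_def.mp hlt)
        exact Fin.le_def.mp (hfm.monotone hle)
      exact ⟨by omega, by omega⟩
    have hsep' : ∀ j j' : Fin m, j ≠ j' →
        ¬ ((p ≤ (f j : ℕ) ∧ (f j : ℕ) ≤ p + d) ∧ (p ≤ (f j' : ℕ) ∧ (f j' : ℕ) ≤ p + d)) := by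
      intro j j' hne
      rcases lt_trichotomy j j' with h | h | h
      · exact hsep j j' h
      · exact absurd h hne
      · intro hc; exact hsep j' j h ⟨hc.2, hc.1⟩
    refine hσ ⟨fun j => ⟨delpos d p (f j : ℕ), delpos_lt s d p hp (f j).isLt⟩, ?_, ?_⟩
    · intro j j' hlt
      rw [Fin.lt_def]
      exact delpos_strict d p (Fin.lt_def.mp (hfm hlt)) (hsep j j' hlt)
    · intro j j'
      by_cases hjj : j = j'
      · subst hjj; simp [lt_irrefl]
      · have hcompat := infN_compat s d K p ε (sfun s σ) hp hsfp hpK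
          (f j).isLt (f j').isLt (hsep' j j' hjj)
        show ((σ ⟨delpos d p (f j : ℕ), delpos_lt s d p hp (f j).isLt⟩ : Fin s) : ℕ)
            < ((σ ⟨delpos d p (f j' : ℕ), delpos_lt s d p hp (f j').isLt⟩ : Fin s) : ℕ)
            ↔ τ j < τ j'
        rw [← sfun_eq s σ _ (delpos_lt s d p hp (f j).isLt),
          ← sfun_eq s σ _ (delpos_lt s d p hp (f j').isLt), ← hcompat]
        exact hpat j j'

lemma key_count {m : ℕ} (τ : Equiv.Perm (Fin m))
    (hτ : ¬ ContainsTightly12 τ ∨ ¬ ContainsTightly21 τ)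
    (s d K : ℕ) (hK : K < s) :
    (AvoidSet s τ).ncard ≤ (ClusterEvent (s + d) (d + 1) (K + 1) ∩ AvoidSet (s + d) τ).ncard := by
  obtain ⟨ε, hε⟩ : ∃ ε : Bool, if ε then ¬ ContainsTightly12 τ else ¬ ContainsTightly21 τ := by
    rcases hτ with h | h
    · exact ⟨true, by simpa⟩
    · exact ⟨false, by simpa⟩
  apply Set.ncard_le_ncard_of_injOn (fun σ => infPerm s d K hK ε σ)
  · intro σ hσ
    exact ⟨infPerm_cluster s d K hK ε σ, infPerm_avoids s d K hK ε σ τ hε hσ⟩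
  · exact (infPerm_injective s d K hK ε).injOn


/-- lower bound when `τ` does not contain tightly at least one of 12 and 21. -/
theorem avoid_cluster_lower_bound (m : ℕ) (hm : 2 ≤ m) (τ : Equiv.Perm (Fin m))
    (hτ : ¬ ContainsTightly12 τ ∨ ¬ ContainsTightly21 τ)
    (n : ℕ) (hn : 3 ≤ n) (l : ℕ) (hl2 : 2 ≤ l) (hln : l ≤ n - 1)
    (k : ℕ) (hk1 : 1 ≤ k) (hk2 : k ≤ n - l + 1) :
    (AvoidSet (n - l + 1) τ).ncard ≤ (ClusterEvent n l k ∩ AvoidSet n τ).ncard ∧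
    ((AvoidSet (n - l + 1) τ).ncard : ℝ) / ((AvoidSet n τ).ncard : ℝ) ≤
      ((ClusterEvent n l k ∩ AvoidSet n τ).ncard : ℝ) / ((AvoidSet n τ).ncard : ℝ) := by
  obtain ⟨s, d, K, rfl, rfl, rfl, hK⟩ :
      ∃ s d K, n = s + d ∧ l = d + 1 ∧ k = K + 1 ∧ K < s :=
    ⟨n - l + 1, l - 1, k - 1, by omega, by omega, by omega, by omega⟩
  have hs : s + d - (d + 1) + 1 = s := by omega
  rw [hs]
  have h1 := key_count τ hτ s d K hK
  refine ⟨h1, ?_⟩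
  exact div_le_div_of_nonneg_right (by exact_mod_cast h1) (by positivity)
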